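/- Let f : ℝ^{m×n} → ℝ satisfy f(Y) ≤ f(X) + ⟨∇f(X), Y − X⟩ + (L/2)‖X − Y‖² where ‖·‖ is the spectral norm. Let Δ satisfy ⟨Δ, B⟩ = −η‖B‖₊² and ‖Δ‖ = η‖B‖₊ (the spectral steepest-descent step for B). Then with X' = X + Δ and the choice c = η: (η/2 − η²L/2)‖∇f(X)‖₊² ≤ 2(f(X) − f(X')) + (2η − η²L)‖∇f(X) − B‖₊². -/

import Mathlib

open Matrix MeasureTheory ProbabilityTheory

noncomputable def frob {m n : ℕ} (X : Matrix (Fin m) (Fin n) ℝ) : ℝ :=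
  Real.sqrt ((Xᵀ * X).trace)

def finner {m n : ℕ} (X Y : Matrix (Fin m) (Fin n) ℝ) : ℝ :=
  (Xᵀ * Y).trace

noncomputable def spec {m n : ℕ} (X : Matrix (Fin m) (Fin n) ℝ) : ℝ :=
  ‖LinearMap.toContinuousLinearMap (Matrix.toEuclideanLin X)‖

noncomputable def nuclear {m n : ℕ} (X : Matrix (Fin m) (Fin n) ℝ) : ℝ :=
  ∑ i, Real.sqrt ((show (Xᵀ * X).IsHermitian by
    simpa [Matrix.conjTranspose_eq_transpose_of_trivial] using
      Matrix.isHermitian_conjTranspose_mul_self X).eigenvalues i)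

lemma hTA {m n : ℕ} (X : Matrix (Fin m) (Fin n) ℝ) : (Xᵀ * X).IsHermitian := by
  simpa [Matrix.conjTranspose_eq_transpose_of_trivial] using
    Matrix.isHermitian_conjTranspose_mul_self X

lemma norm_symm_sq {k : ℕ} (w : Fin k → ℝ) :
    ‖(WithLp.equiv 2 (Fin k → ℝ)).symm w‖ ^ 2 = w ⬝ᵥ w := by
  rw [EuclideanSpace.norm_eq, Real.sq_sqrt (by positivity)]
  simp [dotProduct, Real.norm_eq_abs, sq_abs, pow_two]

lemma spec_nonneg {m n : ℕ} (D : Matrix (Fin m) (Fin n) ℝ) : 0 ≤ spec D := norm_nonneg _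

lemma spec_bound {m n : ℕ} (D : Matrix (Fin m) (Fin n) ℝ) (v : Fin n → ℝ) :
    (D *ᵥ v) ⬝ᵥ (D *ᵥ v) ≤ spec D ^ 2 * (v ⬝ᵥ v) := by
  have h := (LinearMap.toContinuousLinearMap (Matrix.toEuclideanLin D)).le_opNorm
    ((WithLp.equiv 2 (Fin n → ℝ)).symm v)
  rw [LinearMap.coe_toContinuousLinearMap'] at h
  have e : (Matrix.toEuclideanLin D) ((WithLp.equiv 2 (Fin n → ℝ)).symm v) =
      (WithLp.equiv 2 (Fin m → ℝ)).symm (D *ᵥ v) := rfl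
  rw [e] at h
  have h2 : ‖(WithLp.equiv 2 (Fin m → ℝ)).symm (D *ᵥ v)‖ ^ 2 ≤
      (spec D * ‖(WithLp.equiv 2 (Fin n → ℝ)).symm v‖) ^ 2 := by
    apply pow_le_pow_left₀ (norm_nonneg _) h
  rw [norm_symm_sq, mul_pow, norm_symm_sq] at h2
  exact h2

lemma dot_cs {k : ℕ} (u w : Fin k → ℝ) : (u ⬝ᵥ w) ^ 2 ≤ (u ⬝ᵥ u) * (w ⬝ᵥ w) := by
  simpa [dotProduct, pow_two, mul_mul_mul_comm] using
    Finset.sum_mul_sq_le_sq_mul_sq Finset.univ u w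

noncomputable def evec {m n : ℕ} (A : Matrix (Fin m) (Fin n) ℝ) (j : Fin n) : Fin n → ℝ :=
  ⇑((hTA A).eigenvectorBasis j)

noncomputable def evl {m n : ℕ} (A : Matrix (Fin m) (Fin n) ℝ) (j : Fin n) : ℝ :=
  (hTA A).eigenvalues j

lemma evl_nonneg {m n : ℕ} (A : Matrix (Fin m) (Fin n) ℝ) (j : Fin n) : 0 ≤ evl A j :=
  by
  have h : (Aᵀ * A).PosSemidef := by
    simpa [Matrix.conjTranspose_eq_transpose_of_trivial] using
      Matrix.posSemidef_conjTranspose_mul_self A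
  exact h.eigenvalues_nonneg j

lemma nuclear_eq {m n : ℕ} (A : Matrix (Fin m) (Fin n) ℝ) :
    nuclear A = ∑ j, Real.sqrt (evl A j) := rfl

lemma mulVec_evec {m n : ℕ} (A : Matrix (Fin m) (Fin n) ℝ) (j : Fin n) :
    (Aᵀ * A) *ᵥ evec A j = evl A j • evec A j := by
  have := (hTA A).mulVec_eigenvectorBasis j
  exact this

lemma evec_dot {m n : ℕ} (A : Matrix (Fin m) (Fin n) ℝ) (i j : Fin n) :
    evec A i ⬝ᵥ evec A j = if i = j then 1 else 0 := by
  have h := (hTA A).eigenvectorBasis.orthonormal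
  rw [orthonormal_iff_ite] at h
  have := h i j
  simpa [PiLp.inner_apply, dotProduct, evec, mul_comm] using this

lemma evec_complete {m n : ℕ} (A : Matrix (Fin m) (Fin n) ℝ) (a b : Fin n) :
    ∑ j, evec A j a * evec A j b = if a = b then 1 else 0 := by
  set hA := hTA A
  have h := hA.eigenvectorUnitary.2.2
  have h2 : ((hA.eigenvectorUnitary : Matrix (Fin n) (Fin n) ℝ) *
      star (hA.eigenvectorUnitary : Matrix (Fin n) (Fin n) ℝ)) a b
      = (1 : Matrix (Fin n) (Fin n) ℝ) a b := by rw [h]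
  rw [Matrix.mul_apply, Matrix.one_apply] at h2
  simpa [Matrix.star_apply, evec] using h2

lemma trace_eq_sum_evec {m n : ℕ} (A : Matrix (Fin m) (Fin n) ℝ)
    (M : Matrix (Fin n) (Fin n) ℝ) :
    M.trace = ∑ j, evec A j ⬝ᵥ (M *ᵥ evec A j) := by
  have : ∀ j, evec A j ⬝ᵥ (M *ᵥ evec A j)
      = ∑ a, ∑ b, M a b * (evec A j a * evec A j b) := by
    intro j
    simp [dotProduct, Matrix.mulVec, Finset.mul_sum]
    congr 1; ext a; congr 1; ext b; ring
  rw [Finset.sum_congr rfl (fun j _ => this j), Finset.sum_comm]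
  rw [Matrix.trace]
  apply Finset.sum_congr rfl
  intro a _
  rw [Finset.sum_comm]
  have : ∀ b, ∑ j, M a b * (evec A j a * evec A j b)
      = M a b * (if a = b then 1 else 0) := by
    intro b
    rw [← Finset.mul_sum, evec_complete]
  simp [Finset.sum_congr rfl (fun b _ => this b), Matrix.diag]

lemma mulVec_dot_mulVec {m n : ℕ} (A D : Matrix (Fin m) (Fin n) ℝ) (x y : Fin n → ℝ) :
    (A *ᵥ x) ⬝ᵥ (D *ᵥ y) = x ⬝ᵥ ((Aᵀ * D) *ᵥ y) := by
  rw [← Matrix.mulVec_mulVec, dotProduct_comm, Matrix.dotProduct_mulVec,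
    ← Matrix.mulVec_transpose, dotProduct_comm]

lemma finner_eq_sum {m n : ℕ} (A D : Matrix (Fin m) (Fin n) ℝ) :
    finner A D = ∑ j, (A *ᵥ evec A j) ⬝ᵥ (D *ᵥ evec A j) := by
  rw [finner, trace_eq_sum_evec A]
  exact Finset.sum_congr rfl fun j _ => (mulVec_dot_mulVec A D _ _).symm

lemma mulVec_evec_dot {m n : ℕ} (A : Matrix (Fin m) (Fin n) ℝ) (i j : Fin n) :
    (A *ᵥ evec A i) ⬝ᵥ (A *ᵥ evec A j) = if i = j then evl A j else 0 := by
  rw [mulVec_dot_mulVec, mulVec_evec, dotProduct_smul, smul_eq_mul, evec_dot]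
  by_cases h : i = j <;> simp [h]

lemma nuclear_nonneg {m n : ℕ} (A : Matrix (Fin m) (Fin n) ℝ) : 0 ≤ nuclear A :=
  Finset.sum_nonneg fun i _ => Real.sqrt_nonneg _

lemma finner_le {m n : ℕ} (A D : Matrix (Fin m) (Fin n) ℝ) :
    finner A D ≤ nuclear A * spec D := by
  rw [finner_eq_sum, nuclear_eq, Finset.sum_mul]
  apply Finset.sum_le_sum
  intro j _
  set t := (A *ᵥ evec A j) ⬝ᵥ (D *ᵥ evec A j) with ht
  have h1 : t ^ 2 ≤ evl A j * (spec D ^ 2) := by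
    calc t ^ 2 ≤ ((A *ᵥ evec A j) ⬝ᵥ (A *ᵥ evec A j)) *
        ((D *ᵥ evec A j) ⬝ᵥ (D *ᵥ evec A j)) := dot_cs _ _
    _ ≤ evl A j * (spec D ^ 2 * (evec A j ⬝ᵥ evec A j)) := by
        rw [mulVec_evec_dot]
        simp only [if_pos rfl]
        exact mul_le_mul_of_nonneg_left (spec_bound D _) (evl_nonneg A j)
    _ = evl A j * (spec D ^ 2) := by rw [evec_dot]; simp
  calc t ≤ |t| := le_abs_self t
  _ = Real.sqrt (t ^ 2) := (Real.sqrt_sq_eq_abs t).symm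
  _ ≤ Real.sqrt (evl A j * spec D ^ 2) := Real.sqrt_le_sqrt h1
  _ = Real.sqrt (evl A j) * spec D := by
      rw [Real.sqrt_mul (evl_nonneg A j), Real.sqrt_sq (spec_nonneg D)]

lemma sumvec_dot {k N : ℕ} (f : Fin N → Fin k → ℝ) (w : Fin k → ℝ) :
    (∑ i, f i) ⬝ᵥ w = ∑ i, f i ⬝ᵥ w := by
  simp only [dotProduct, Finset.sum_apply, Finset.sum_mul]
  exact Finset.sum_comm

lemma dot_sumvec {k N : ℕ} (w : Fin k → ℝ) (f : Fin N → Fin k → ℝ) :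
    w ⬝ᵥ (∑ i, f i) = ∑ i, w ⬝ᵥ f i := by
  simp only [dotProduct, Finset.sum_apply, Finset.mul_sum]
  exact Finset.sum_comm

lemma of_outer_mulVec {m n N : ℕ} (c : Fin N → ℝ) (w : Fin N → Fin m → ℝ)
    (v : Fin N → Fin n → ℝ) (u : Fin n → ℝ) :
    (Matrix.of fun k l => ∑ j, c j * w j k * v j l) *ᵥ u
      = ∑ j, (c j * (v j ⬝ᵥ u)) • w j := by
  ext k
  simp only [Matrix.mulVec, dotProduct, Matrix.of_apply, Finset.sum_apply,
    Pi.smul_apply, smul_eq_mul, Finset.sum_mul]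
  rw [Finset.sum_comm]
  refine Finset.sum_congr rfl fun j _ => ?_
  have : (c j * ∑ l, v j l * u l) * w j k = ∑ l, c j * (v j l * u l) * w j k := by
    rw [Finset.mul_sum, Finset.sum_mul]
  rw [this]
  exact Finset.sum_congr rfl fun l _ => by ring


noncomputable def ccoef {m n : ℕ} (A : Matrix (Fin m) (Fin n) ℝ) (j : Fin n) : ℝ :=
  if 0 < evl A j then (Real.sqrt (evl A j))⁻¹ else 0

noncomputable def dualCert {m n : ℕ} (A : Matrix (Fin m) (Fin n) ℝ) :
    Matrix (Fin m) (Fin n) ℝ :=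
  Matrix.of fun k l => ∑ j, ccoef A j * (A *ᵥ evec A j) k * evec A j l

lemma dualCert_mulVec {m n : ℕ} (A : Matrix (Fin m) (Fin n) ℝ) (u : Fin n → ℝ) :
    dualCert A *ᵥ u = ∑ j, (ccoef A j * (evec A j ⬝ᵥ u)) • (A *ᵥ evec A j) :=
  of_outer_mulVec (ccoef A) (fun j => A *ᵥ evec A j) (evec A) u

lemma parseval {m n : ℕ} (A : Matrix (Fin m) (Fin n) ℝ) (u : Fin n → ℝ) :
    ∑ j, (evec A j ⬝ᵥ u) ^ 2 = u ⬝ᵥ u := by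
  have : ∀ j, (evec A j ⬝ᵥ u) ^ 2 = ∑ a, ∑ b, (u a * u b) * (evec A j a * evec A j b) := by
    intro j
    simp only [pow_two, dotProduct, Finset.sum_mul, Finset.mul_sum]
    apply Finset.sum_congr rfl; intro a _
    apply Finset.sum_congr rfl; intro b _; ring
  rw [Finset.sum_congr rfl fun j _ => this j, Finset.sum_comm]
  apply Finset.sum_congr rfl
  intro a _
  rw [Finset.sum_comm]
  have : ∀ b, ∑ j, (u a * u b) * (evec A j a * evec A j b)
      = (u a * u b) * (if a = b then 1 else 0) := fun b => by
    rw [← Finset.mul_sum, evec_complete]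
  simp [Finset.sum_congr rfl (fun b _ => this b), pow_two]

lemma dualCert_contract {m n : ℕ} (A : Matrix (Fin m) (Fin n) ℝ) (u : Fin n → ℝ) :
    (dualCert A *ᵥ u) ⬝ᵥ (dualCert A *ᵥ u) ≤ u ⬝ᵥ u := by
  rw [dualCert_mulVec, sumvec_dot]
  have : ∀ i, ((ccoef A i * (evec A i ⬝ᵥ u)) • (A *ᵥ evec A i)) ⬝ᵥ
      (∑ j, (ccoef A j * (evec A j ⬝ᵥ u)) • (A *ᵥ evec A j))
      = ccoef A i ^ 2 * evl A i * (evec A i ⬝ᵥ u) ^ 2 := by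
    intro i
    rw [dot_sumvec]
    rw [Finset.sum_eq_single i]
    · rw [smul_dotProduct, dotProduct_smul, mulVec_evec_dot]
      simp only [eq_self_iff_true, if_true, smul_eq_mul]; ring
    · intro j _ hj
      rw [smul_dotProduct, dotProduct_smul, mulVec_evec_dot]
      rw [if_neg (by exact fun h => hj h.symm)]
      simp
    · intro h; exact absurd (Finset.mem_univ i) h
  rw [Finset.sum_congr rfl fun i _ => this i]
  rw [← parseval A u]
  apply Finset.sum_le_sum
  intro j _
  have hb : ccoef A j ^ 2 * evl A j ≤ 1 := by
    rw [ccoef]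
    split_ifs with h
    · set t := Real.sqrt (evl A j) with ht
      have htpos : 0 < t := Real.sqrt_pos.mpr h
      rw [← Real.mul_self_sqrt (evl_nonneg A j), ← ht]
      rw [pow_two]
      field_simp
      exact le_refl _
    · simp
  nlinarith [sq_nonneg (evec A j ⬝ᵥ u), sq_nonneg (ccoef A j)]

lemma spec_dualCert {m n : ℕ} (A : Matrix (Fin m) (Fin n) ℝ) : spec (dualCert A) ≤ 1 := by
  rw [spec]
  apply ContinuousLinearMap.opNorm_le_bound _ zero_le_one
  intro x
  rw [LinearMap.coe_toContinuousLinearMap']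
  have hx : x = (WithLp.equiv 2 (Fin n → ℝ)).symm ((WithLp.equiv 2 (Fin n → ℝ)) x) := rfl
  have e : (Matrix.toEuclideanLin (dualCert A)) ((WithLp.equiv 2 (Fin n → ℝ)).symm
      ((WithLp.equiv 2 (Fin n → ℝ)) x)) =
      (WithLp.equiv 2 (Fin m → ℝ)).symm (dualCert A *ᵥ (WithLp.equiv 2 (Fin n → ℝ)) x) := rfl
  rw [hx, e]
  set u := (WithLp.equiv 2 (Fin n → ℝ)) x
  have h1 : ‖(WithLp.equiv 2 (Fin m → ℝ)).symm (dualCert A *ᵥ u)‖ ^ 2 ≤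
      ‖(WithLp.equiv 2 (Fin n → ℝ)).symm u‖ ^ 2 := by
    rw [norm_symm_sq, norm_symm_sq]; exact dualCert_contract A u
  have h2 := Real.sqrt_le_sqrt h1
  rw [Real.sqrt_sq (norm_nonneg _), Real.sqrt_sq (norm_nonneg _)] at h2
  rw [one_mul, ← hx]
  exact h2

lemma finner_dualCert {m n : ℕ} (A : Matrix (Fin m) (Fin n) ℝ) :
    finner A (dualCert A) = nuclear A := by
  rw [finner_eq_sum, nuclear_eq]
  apply Finset.sum_congr rfl
  intro j _
  rw [dualCert_mulVec, dot_sumvec]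
  rw [Finset.sum_eq_single j]
  · rw [dotProduct_smul, mulVec_evec_dot, if_pos rfl, smul_eq_mul, evec_dot,
      if_pos rfl, ccoef]
    split_ifs with h
    · set t := Real.sqrt (evl A j) with ht
      have htpos : 0 < t := Real.sqrt_pos.mpr h
      rw [← Real.mul_self_sqrt (evl_nonneg A j), ← ht]
      field_simp
    · have : evl A j = 0 := le_antisymm (not_lt.mp h) (evl_nonneg A j)
      simp [this]
  · intro i _ hi
    rw [dotProduct_smul, mulVec_evec_dot, if_neg (Ne.symm hi)]
    simp
  · intro h; exact absurd (Finset.mem_univ j) h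

lemma finner_comm {m n : ℕ} (P Q : Matrix (Fin m) (Fin n) ℝ) : finner P Q = finner Q P := by
  rw [finner, finner, ← Matrix.trace_transpose, Matrix.transpose_mul, Matrix.transpose_transpose]

lemma finner_sub_left {m n : ℕ} (P Q R : Matrix (Fin m) (Fin n) ℝ) :
    finner (P - Q) R = finner P R - finner Q R := by
  rw [finner, finner, finner, Matrix.transpose_sub, Matrix.sub_mul, Matrix.trace_sub]

lemma spec_neg {m n : ℕ} (D : Matrix (Fin m) (Fin n) ℝ) : spec (-D) = spec D := by
  rw [spec, spec, map_neg, map_neg, norm_neg]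

lemma nuclear_triangle {m n : ℕ} (P Q : Matrix (Fin m) (Fin n) ℝ) :
    nuclear (P + Q) ≤ nuclear P + nuclear Q := by
  have h1 : finner (P + Q) (dualCert (P + Q)) = nuclear (P + Q) := finner_dualCert _
  have h2 : finner (P + Q) (dualCert (P + Q))
      = finner P (dualCert (P + Q)) + finner Q (dualCert (P + Q)) := by
    rw [finner, finner, finner, Matrix.transpose_add, Matrix.add_mul, Matrix.trace_add]
  have h3 := finner_le P (dualCert (P + Q))
  have h4 := finner_le Q (dualCert (P + Q))
  have h5 := spec_dualCert (P + Q)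
  have h6 := spec_nonneg (dualCert (P + Q))
  nlinarith [nuclear_nonneg P, nuclear_nonneg Q]

/-- One step of the spectral steepest-descent scheme: if `f` satisfies the
spectral-norm quadratic upper bound with gradient `g`, and `Δ` satisfies
`⟨Δ, B⟩ = −η‖B‖₊²` and `‖Δ‖₂ = η‖B‖₊`, then (with `c = η`)
`(η/2 − η²L/2)‖g X‖₊² ≤ 2(f X − f(X + Δ)) + (2η − η²L)‖g X − B‖₊²`. -/
theorem stmt18 {m n : ℕ} (f : Matrix (Fin m) (Fin n) ℝ → ℝ)
    (g : Matrix (Fin m) (Fin n) ℝ → Matrix (Fin m) (Fin n) ℝ)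
    (L η : ℝ) (hL : 0 < L) (hη : 0 < η) (hηL : η * L < 1)
    (hsmooth : ∀ X Y, f Y ≤ f X + finner (g X) (Y - X) + L / 2 * spec (X - Y) ^ 2)
    (X B Δ : Matrix (Fin m) (Fin n) ℝ)
    (hΔ1 : finner Δ B = -η * nuclear B ^ 2)
    (hΔ2 : spec Δ = η * nuclear B) :
    (η / 2 - η ^ 2 * L / 2) * nuclear (g X) ^ 2 ≤
      2 * (f X - f (X + Δ)) + (2 * η - η ^ 2 * L) * nuclear (g X - B) ^ 2 := by
  set a := nuclear B with ha
  set e := nuclear (g X - B) with he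
  set N := nuclear (g X) with hN
  have ha0 : 0 ≤ a := nuclear_nonneg B
  have he0 : 0 ≤ e := nuclear_nonneg _
  have hN0 : 0 ≤ N := nuclear_nonneg _
  have htri : N ≤ e + a := by
    have := nuclear_triangle (g X - B) B
    rwa [sub_add_cancel] at this
  have hsm := hsmooth X (X + Δ)
  have e1 : X + Δ - X = Δ := by abel
  have e2 : X - (X + Δ) = -Δ := by abel
  rw [e1, e2, spec_neg, hΔ2] at hsm
  have e3 : finner (g X) Δ = finner B Δ + finner (g X - B) Δ := by
    rw [finner_sub_left]; ring
  have e4 : finner B Δ = -η * a ^ 2 := by rw [finner_comm]; exact hΔ1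
  have e5 : finner (g X - B) Δ ≤ e * (η * a) := by
    have := finner_le (g X - B) Δ
    rwa [hΔ2, ← he] at this
  have hsm2 : f (X + Δ) ≤ f X + (-η * a ^ 2 + e * (η * a)) + L / 2 * (η * a) ^ 2 := by
    rw [e3, e4] at hsm
    linarith
  have hcoef : 0 ≤ η / 2 - η ^ 2 * L / 2 := by nlinarith
  have h2 : N ^ 2 ≤ (a + e) ^ 2 := by nlinarith
  have h4 := mul_le_mul_of_nonneg_left h2 hcoef
  have h1 : 0 ≤ η * (3 - η * L) * (a - e) ^ 2 :=
    mul_nonneg (mul_nonneg hη.le (by linarith)) (sq_nonneg _)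
  nlinarith [h4, h1, hsm2]
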